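/- Suppose x lies in the T-period-n part of f × g × w and w^T(x, n) ≤ 1. Then for every r ∈ ℕ, the ratio R_{nq+r}(x) = S_f^{nq+r}(x) / S_g^{nq+r}(x) converges to R_n(x) = S_f^n(x)/S_g^n(x) as q → ∞. -/

import Mathlib

open Finset Filter

noncomputable def cocycle {X : Type*} (T : X → X) (w : X → ℝ) (x : X) (k : ℕ) : ℝ :=
  ∏ j ∈ Finset.range k, w (T^[j] x)

noncomputable def wSum {X : Type*} (T : X → X) (w : X → ℝ) (h : X → ℝ) (n : ℕ) (x : X) : ℝ :=
  ∑ k ∈ Finset.range n, h (T^[k] x) * cocycle T w x k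

noncomputable def ratio {X : Type*} (T : X → X) (w f g : X → ℝ) (n : ℕ) (x : X) : ℝ :=
  wSum T w f n x / wSum T w g n x

def InPeriodPart {X Y : Type*} (T : X → X) (h : X → Y) (n : ℕ) (x : X) : Prop :=
  ∀ k : ℕ, h (T^[k] x) = h (T^[n] (T^[k] x))

theorem ratio_tendsto_of_cocycle_le_one {X : Type*} (T : X → X) (f g w : X → ℝ)
    (hg : ∀ x, 0 < g x) (hw : ∀ x, 0 < w x) (n : ℕ) (hn : 1 ≤ n) (x : X)
    (hx : InPeriodPart T (fun y => (f y, g y, w y)) n x)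
    (hcoc : cocycle T w x n ≤ 1) :
    ∀ r : ℕ,
      Tendsto (fun q : ℕ => ratio T w f g (n * q + r) x) atTop
        (nhds (ratio T w f g n x)) := by
  intro r
  set c := cocycle T w x n with hc
  have hcpos : 0 < c := Finset.prod_pos fun j _ => hw _
  have hwper : ∀ k, w (T^[n + k] x) = w (T^[k] x) := by
    intro k
    have := congrArg (Prod.snd ∘ Prod.snd) (hx k)
    simp only [Function.comp] at this
    rw [← Function.iterate_add_apply] at this
    exact this.symm
  have hfper : ∀ k, f (T^[n + k] x) = f (T^[k] x) := by
    intro k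
    have := congrArg Prod.fst (hx k)
    simp only at this
    rw [← Function.iterate_add_apply] at this
    exact this.symm
  have hgper : ∀ k, g (T^[n + k] x) = g (T^[k] x) := by
    intro k
    have := congrArg (Prod.fst ∘ Prod.snd) (hx k)
    simp only [Function.comp] at this
    rw [← Function.iterate_add_apply] at this
    exact this.symm
  have hcocadd : ∀ m, cocycle T w x (n + m) = c * cocycle T w x m := by
    intro m
    rw [hc]
    simp only [cocycle, Finset.prod_range_add]
    congr 1
    exact Finset.prod_congr rfl fun j _ => hwper j
  have hSadd : ∀ (h : X → ℝ), (∀ k, h (T^[n + k] x) = h (T^[k] x)) →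
      ∀ m, wSum T w h (n + m) x = wSum T w h n x + c * wSum T w h m x := by
    intro h hper m
    simp only [wSum, Finset.sum_range_add, Finset.mul_sum]
    congr 1
    refine Finset.sum_congr rfl fun j _ => ?_
    rw [hper j, hcocadd j]; ring
  have key : ∀ (h : X → ℝ), (∀ k, h (T^[n + k] x) = h (T^[k] x)) → ∀ q,
      wSum T w h (n * q + r) x
        = (∑ j ∈ Finset.range q, c ^ j) * wSum T w h n x + c ^ q * wSum T w h r x := by
    intro h hper q
    induction q with
    | zero => simp
    | succ q ih =>
      have hq : n * (q + 1) + r = n + (n * q + r) := by ring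
      rw [hq, hSadd h hper, ih, geom_sum_succ]
      ring
  set A := wSum T w f n x with hA
  set B := wSum T w g n x with hB
  set a := wSum T w f r x with ha
  set b := wSum T w g r x with hb
  have hBpos : 0 < B := by
    rw [hB, wSum]
    apply Finset.sum_pos
    · intro k _
      exact mul_pos (hg _) (Finset.prod_pos fun j _ => hw _)
    · exact Finset.nonempty_range_iff.mpr (by omega)
  have hbnn : 0 ≤ b := by
    rw [hb, wSum]
    exact Finset.sum_nonneg fun k _ =>
      le_of_lt (mul_pos (hg _) (Finset.prod_pos fun j _ => hw _))
  set s : ℕ → ℝ := fun q => ∑ j ∈ Finset.range q, c ^ j with hs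
  have hspos : ∀ q, 1 ≤ q → 0 < s q := by
    intro q hq
    exact Finset.sum_pos (fun j _ => pow_pos hcpos j) (Finset.nonempty_range_iff.mpr (by omega))
  have hslb : ∀ q : ℕ, (q : ℝ) * c ^ q ≤ s q := by
    intro q
    have : ∀ j ∈ Finset.range q, c ^ q ≤ c ^ j := fun j hj =>
      pow_le_pow_of_le_one hcpos.le hcoc (le_of_lt (Finset.mem_range.mp hj))
    calc (q : ℝ) * c ^ q = ∑ _j ∈ Finset.range q, c ^ q := by
            simp [Finset.sum_const, mul_comm]
      _ ≤ s q := Finset.sum_le_sum this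
  set t : ℕ → ℝ := fun q => c ^ q / s q with ht
  have htnn : ∀ q, 1 ≤ q → 0 ≤ t q := fun q hq =>
    div_nonneg (pow_pos hcpos q).le (hspos q hq).le
  have htle : ∀ q, 1 ≤ q → t q ≤ 1 / (q : ℝ) := by
    intro q hq
    have hq0 : (0 : ℝ) < q := by exact_mod_cast hq
    rw [ht, div_le_div_iff₀ (hspos q hq) hq0]
    calc c ^ q * q = q * c ^ q := by ring
      _ ≤ s q := hslb q
      _ = 1 * s q := (one_mul _).symm
  have ht0 : Tendsto t atTop (nhds 0) := by
    apply squeeze_zero' (Filter.eventually_atTop.mpr ⟨1, htnn⟩)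
      (Filter.eventually_atTop.mpr ⟨1, htle⟩)
    exact tendsto_one_div_atTop_nhds_zero_nat
  have hlim : Tendsto (fun q => (A + t q * a) / (B + t q * b)) atTop
      (nhds (ratio T w f g n x)) := by
    have hnum : Tendsto (fun q => A + t q * a) atTop (nhds (A + 0 * a)) :=
      tendsto_const_nhds.add (ht0.mul_const a)
    have hden : Tendsto (fun q => B + t q * b) atTop (nhds (B + 0 * b)) :=
      tendsto_const_nhds.add (ht0.mul_const b)
    have hne : B + 0 * b ≠ 0 := by simp [hBpos.ne']
    have := hnum.div hden hne
    simpa [ratio, ← hA, ← hB, Pi.div_def] using this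
  apply hlim.congr'
  filter_upwards [Filter.eventually_atTop.mpr ⟨1, fun q (hq : 1 ≤ q) => hq⟩] with q hq
  have hsne : s q ≠ 0 := (hspos q hq).ne'
  have hdenpos : 0 < B * s q + c ^ q * b := by
    have : 0 < B * s q := mul_pos hBpos (hspos q hq)
    nlinarith [mul_nonneg (pow_pos hcpos q).le hbnn]
  rw [ratio, key f hfper q, key g hgper q, ← hA, ← hB, ← ha, ← hb]
  show (A + c ^ q / s q * a) / (B + c ^ q / s q * b) = (s q * A + c ^ q * a) / (s q * B + c ^ q * b)
  have h1 : (0:ℝ) < B + c ^ q / s q * b :=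
    add_pos_of_pos_of_nonneg hBpos (mul_nonneg (div_nonneg (pow_pos hcpos q).le (hspos q hq).le) hbnn)
  have h2 : (0:ℝ) < s q * B + c ^ q * b := by
    have := mul_pos (hspos q hq) hBpos
    nlinarith [mul_nonneg (pow_pos hcpos q).le hbnn]
  rw [div_eq_div_iff h1.ne' h2.ne']
  field_simp
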